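/- Let G be an n-resource selection game such that no two of the cost functions f_1, …, f_n share any plateau height. Then for every resource j ∈ {1,…,n} and every two Nash equilibria s and s' of G, the loads coincide: ℓ_j^s = ℓ_j^{s'}. -/

import Mathlib

open scoped NNReal

namespace RSG

/-- A consumption profile in an `n`-resource selection game: each nonempty type
`R ⊆ [n]` distributes its mass `μ R` among the resources in `R`. -/
def IsProfile (n : ℕ) (μ : Finset (Fin n) → ℝ≥0) (s : Finset (Fin n) → Fin n → ℝ≥0) : Prop :=
  (∀ R : Finset (Fin n), ∀ j : Fin n, j ∉ R → s R j = 0) ∧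
  (∀ R : Finset (Fin n), R.Nonempty → ∑ j ∈ R, s R j = μ R)

/-- The load on resource `j` in profile `s`. -/
def load (n : ℕ) (s : Finset (Fin n) → Fin n → ℝ≥0) (j : Fin n) : ℝ≥0 :=
  ∑ R : Finset (Fin n), s R j

/-- The cost of resource `j` in profile `s`. -/
def cost (n : ℕ) (f : Fin n → ℝ≥0 → ℝ) (s : Finset (Fin n) → Fin n → ℝ≥0) (j : Fin n) : ℝ :=
  f j (load n s j)

/-- A Nash equilibrium. -/
def IsNash (n : ℕ) (f : Fin n → ℝ≥0 → ℝ) (μ : Finset (Fin n) → ℝ≥0)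
    (s : Finset (Fin n) → Fin n → ℝ≥0) : Prop :=
  IsProfile n μ s ∧
  ∀ R : Finset (Fin n), ∀ k ∈ R, 0 < s R k → ∀ j ∈ R, cost n f s k ≤ cost n f s j

/-- A strong Nash equilibrium: a Nash equilibrium `s` such that there is no
consumption profile `s' ≠ s` in which every player who strictly increases its
consumption of some resource `k` (i.e. `s' R k > s R k`) pays, at `k` in `s'`,
strictly less than the common equilibrium cost `h^R` of its type
(expressed via: less than `cost s j` for every `j` in the support of `s R`). -/
def IsStrong (n : ℕ) (f : Fin n → ℝ≥0 → ℝ) (μ : Finset (Fin n) → ℝ≥0)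
    (s : Finset (Fin n) → Fin n → ℝ≥0) : Prop :=
  IsNash n f μ s ∧
  ¬ ∃ s' : Finset (Fin n) → Fin n → ℝ≥0, IsProfile n μ s' ∧ s' ≠ s ∧
    ∀ R : Finset (Fin n), ∀ k : Fin n, s R k < s' R k →
      ∀ j : Fin n, 0 < s R j → cost n f s' k < cost n f s j

end RSG

open RSG

/-- `h` is a plateau height of `f` if `f` attains the value `h` at two distinct points. -/
def IsPlateauHeight (f : ℝ≥0 → ℝ) (h : ℝ) : Prop :=
  ∃ x y : ℝ≥0, x ≠ y ∧ f x = h ∧ f y = h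

namespace NashAux

variable {n : ℕ} {μ : Finset (Fin n) → ℝ≥0}

lemma coe_sum_eq (t : Finset (Fin n) → Fin n → ℝ≥0) (hp : IsProfile n μ t)
    (R : Finset (Fin n)) (hR : R.Nonempty) :
    ∑ j ∈ R, (t R j : ℝ) = (μ R : ℝ) := by
  rw [← NNReal.coe_sum, hp.2 R hR]

lemma swap_sum (D : Fin n → ℝ) (t : Finset (Fin n) → Fin n → ℝ≥0)
    (hp : IsProfile n μ t) :
    ∑ j : Fin n, D j * (load n t j : ℝ)
      = ∑ R : Finset (Fin n), ∑ j ∈ R, D j * (t R j : ℝ) := by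
  have key : ∀ j, D j * (load n t j : ℝ) = ∑ R : Finset (Fin n), D j * (t R j : ℝ) := by
    intro j
    rw [load, NNReal.coe_sum, Finset.mul_sum]
  simp_rw [key]
  rw [Finset.sum_comm]
  refine Finset.sum_congr rfl fun R _ => ?_
  symm
  apply Finset.sum_subset (Finset.subset_univ R)
  intro x _ hx
  rw [hp.1 R x hx]
  simp

lemma ge_inf (D : Fin n → ℝ) (t : Finset (Fin n) → Fin n → ℝ≥0) (hp : IsProfile n μ t)
    (R : Finset (Fin n)) (hR : R.Nonempty) :
    R.inf' hR D * (μ R : ℝ) ≤ ∑ j ∈ R, D j * (t R j : ℝ) := by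
  calc R.inf' hR D * (μ R : ℝ) = ∑ j ∈ R, R.inf' hR D * (t R j : ℝ) := by
        rw [← Finset.mul_sum, coe_sum_eq t hp R hR]
    _ ≤ _ := Finset.sum_le_sum fun i hi =>
        mul_le_mul_of_nonneg_right (Finset.inf'_le _ hi) (t R i).coe_nonneg

lemma nash_support {f : Fin n → ℝ≥0 → ℝ} (t : Finset (Fin n) → Fin n → ℝ≥0)
    (ht : IsNash n f μ t) (R : Finset (Fin n)) (hR : R.Nonempty)
    (k : Fin n) (hk : k ∈ R) (hpos : 0 < t R k) :
    cost n f t k = R.inf' hR (cost n f t) :=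
  le_antisymm (Finset.le_inf' hR _ fun i hi => ht.2 R k hk hpos i hi) (Finset.inf'_le _ hk)

lemma eq_inf {f : Fin n → ℝ≥0 → ℝ} (t : Finset (Fin n) → Fin n → ℝ≥0)
    (ht : IsNash n f μ t) (R : Finset (Fin n)) (hR : R.Nonempty) :
    ∑ j ∈ R, cost n f t j * (t R j : ℝ) = R.inf' hR (cost n f t) * (μ R : ℝ) := by
  have key : ∀ k ∈ R, cost n f t k * (t R k : ℝ) = R.inf' hR (cost n f t) * (t R k : ℝ) := by
    intro k hk
    rcases eq_or_lt_of_le (show (0:ℝ≥0) ≤ t R k from zero_le) with h0 | h0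
    · rw [← h0]; simp
    · rw [nash_support t ht R hR k hk h0]
  rw [Finset.sum_congr rfl key, ← Finset.mul_sum, coe_sum_eq t ht.1 R hR]

end NashAux

/-- If no two of the cost functions share any plateau height,
then the load on each resource is the same in all Nash equilibria. -/
theorem nash_load_unique (n : ℕ) (f : Fin n → ℝ≥0 → ℝ)
    (μ : Finset (Fin n) → ℝ≥0) (hmono : ∀ j, Monotone (f j))
    (hplateau : ∀ i j : Fin n, i ≠ j →
      ∀ h : ℝ, ¬ (IsPlateauHeight (f i) h ∧ IsPlateauHeight (f j) h))
    (s s' : Finset (Fin n) → Fin n → ℝ≥0)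
    (hs : IsNash n f μ s) (hs' : IsNash n f μ s') (j : Fin n) :
    load n s j = load n s' j := by
  classical
  by_contra hne
  obtain ⟨hsp, hsn⟩ := hs
  obtain ⟨hsp', hsn'⟩ := hs'
  set C : Fin n → ℝ := cost n f s with hCdef
  set C' : Fin n → ℝ := cost n f s' with hC'def
  set L : Fin n → ℝ := fun i => (load n s i : ℝ) with hLdef
  set L' : Fin n → ℝ := fun i => (load n s' i : ℝ) with hL'def
  set cA : Finset (Fin n) → ℝ :=
    fun R => (∑ i ∈ R, C i * (s' R i : ℝ)) - ∑ i ∈ R, C i * (s R i : ℝ) with hcAdef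
  set cB : Finset (Fin n) → ℝ :=
    fun R => (∑ i ∈ R, C' i * (s R i : ℝ)) - ∑ i ∈ R, C' i * (s' R i : ℝ) with hcBdef
  -- nonnegativity of the variational terms
  have hcAnn : ∀ R, 0 ≤ cA R := by
    intro R
    rcases R.eq_empty_or_nonempty with rfl | hR
    · simp [hcAdef]
    · have h1 := NashAux.ge_inf (μ := μ) C s' hsp' R hR
      have h2 := NashAux.eq_inf (μ := μ) s ⟨hsp, hsn⟩ R hR
      rw [← hCdef] at h2
      simp only [hcAdef]
      linarith
  have hcBnn : ∀ R, 0 ≤ cB R := by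
    intro R
    rcases R.eq_empty_or_nonempty with rfl | hR
    · simp [hcBdef]
    · have h1 := NashAux.ge_inf (μ := μ) C' s hsp R hR
      have h2 := NashAux.eq_inf (μ := μ) s' ⟨hsp', hsn'⟩ R hR
      rw [← hC'def] at h2
      simp only [hcBdef]
      linarith
  have htermnn : ∀ i : Fin n, 0 ≤ (C i - C' i) * (L i - L' i) := by
    intro i
    rcases le_total (load n s i) (load n s' i) with h | h
    · have h1 : C i ≤ C' i := hmono i h
      have h2 : L i ≤ L' i := by exact_mod_cast h
      nlinarith
    · have h1 : C' i ≤ C i := hmono i h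
      have h2 : L' i ≤ L i := by exact_mod_cast h
      nlinarith
  -- the three sums add up to zero
  have hA : ∑ R : Finset (Fin n), cA R
      = (∑ i : Fin n, C i * L' i) - ∑ i : Fin n, C i * L i := by
    rw [Finset.sum_sub_distrib]
    rw [NashAux.swap_sum (μ := μ) C s' hsp', NashAux.swap_sum (μ := μ) C s hsp]
  have hB : ∑ R : Finset (Fin n), cB R
      = (∑ i : Fin n, C' i * L i) - ∑ i : Fin n, C' i * L' i := by
    rw [Finset.sum_sub_distrib]
    rw [NashAux.swap_sum (μ := μ) C' s hsp, NashAux.swap_sum (μ := μ) C' s' hsp']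
  have hexpand : ∑ i : Fin n, (C i - C' i) * (L i - L' i)
      = ((∑ i : Fin n, C i * L i) - ∑ i : Fin n, C i * L' i)
        - ((∑ i : Fin n, C' i * L i) - ∑ i : Fin n, C' i * L' i) := by
    simp_rw [sub_mul, mul_sub]
    rw [Finset.sum_sub_distrib, Finset.sum_sub_distrib, Finset.sum_sub_distrib]
  have hSAnn : 0 ≤ ∑ R : Finset (Fin n), cA R := Finset.sum_nonneg fun R _ => hcAnn R
  have hSBnn : 0 ≤ ∑ R : Finset (Fin n), cB R := Finset.sum_nonneg fun R _ => hcBnn R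
  have hSCnn : 0 ≤ ∑ i : Fin n, (C i - C' i) * (L i - L' i) :=
    Finset.sum_nonneg fun i _ => htermnn i
  have hSA0 : ∑ R : Finset (Fin n), cA R = 0 := by linarith
  have hSC0 : ∑ i : Fin n, (C i - C' i) * (L i - L' i) = 0 := by linarith
  have hcAzero : ∀ R : Finset (Fin n), cA R = 0 := fun R =>
    (Finset.sum_eq_zero_iff_of_nonneg (fun R _ => hcAnn R)).1 hSA0 R (Finset.mem_univ R)
  have htermzero : ∀ i : Fin n, (C i - C' i) * (L i - L' i) = 0 := fun i =>
    (Finset.sum_eq_zero_iff_of_nonneg (fun i _ => htermnn i)).1 hSC0 i (Finset.mem_univ i)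
  -- costs coincide in the two equilibria
  have hCeq : ∀ i : Fin n, C i = C' i := by
    intro i
    by_cases hl : load n s i = load n s' i
    · simp only [hCdef, hC'def, cost, hl]
    · have h0 := htermzero i
      have hne' : L i - L' i ≠ 0 := by
        refine sub_ne_zero.2 ?_
        simp only [hLdef, hL'def]
        exact_mod_cast hl
      have := (mul_eq_zero.1 h0).resolve_right hne'
      linarith [sub_eq_zero.1 this]
  -- the support of `s'` also sits on resources of minimal `C`-cost
  have hsuppA : ∀ R : Finset (Fin n), ∀ hR : R.Nonempty, ∀ k ∈ R, 0 < s' R k →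
      C k = R.inf' hR C := by
    intro R hR k hk hpos
    have h1 := hcAzero R
    have h2 := NashAux.eq_inf (μ := μ) s ⟨hsp, hsn⟩ R hR
    rw [← hCdef] at h2
    simp only [hcAdef, sub_eq_zero] at h1
    have heq : ∑ i ∈ R, C i * (s' R i : ℝ) = R.inf' hR C * (μ R : ℝ) := by
      rw [h1, h2]
    have hzero : ∑ i ∈ R, (C i - R.inf' hR C) * (s' R i : ℝ) = 0 := by
      simp_rw [sub_mul]
      rw [Finset.sum_sub_distrib, heq, ← Finset.mul_sum,
        NashAux.coe_sum_eq (μ := μ) s' hsp' R hR, sub_self]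
    have hnn : ∀ i ∈ R, 0 ≤ (C i - R.inf' hR C) * (s' R i : ℝ) := fun i hi =>
      mul_nonneg (sub_nonneg.2 (Finset.inf'_le _ hi)) (s' R i).coe_nonneg
    have hk0 := (Finset.sum_eq_zero_iff_of_nonneg hnn).1 hzero k hk
    have hs'ne : (s' R k : ℝ) ≠ 0 := ne_of_gt (by exact_mod_cast hpos)
    have := (mul_eq_zero.1 hk0).resolve_right hs'ne
    linarith [sub_eq_zero.1 this]
  -- counting argument on the level set of the cost of `j`
  set t : ℝ := C j with htdef
  set P : Finset (Fin n) := Finset.univ.filter (fun i => C i = t) with hPdef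
  have hjP : j ∈ P := by simp [hPdef, htdef]
  have hPsum : ∑ i ∈ P, load n s i = ∑ i ∈ P, load n s' i := by
    simp only [load]
    rw [Finset.sum_comm]
    conv_rhs => rw [Finset.sum_comm]
    refine Finset.sum_congr rfl fun R _ => ?_
    rcases R.eq_empty_or_nonempty with rfl | hR
    · refine Finset.sum_congr rfl fun i _ => ?_
      rw [hsp.1 ∅ i (by simp), hsp'.1 ∅ i (by simp)]
    · by_cases hm : R.inf' hR C = t
      · have hgen : ∀ (u : Finset (Fin n) → Fin n → ℝ≥0), IsProfile n μ u →
            (∀ k ∈ R, 0 < u R k → C k = R.inf' hR C) →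
            ∑ i ∈ P, u R i = μ R := by
          intro u hp hsupp
          calc ∑ i ∈ P, u R i = ∑ i : Fin n, u R i := by
                apply Finset.sum_subset (Finset.filter_subset _ _)
                intro x _ hx
                by_contra h0
                have hpos : 0 < u R x := pos_iff_ne_zero.mpr h0
                have hxR : x ∈ R := by
                  by_contra hxR
                  exact h0 (hp.1 R x hxR)
                have hcx := hsupp x hxR hpos
                exact hx (by simp [hPdef, hcx, hm])
            _ = ∑ i ∈ R, u R i :=
                (Finset.sum_subset (Finset.subset_univ R) fun x _ hx => hp.1 R x hx).symm
            _ = μ R := hp.2 R hR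
        rw [hgen s hsp (fun k hk h =>
              NashAux.nash_support (μ := μ) s ⟨hsp, hsn⟩ R hR k hk h),
            hgen s' hsp' (fun k hk h => hsuppA R hR k hk h)]
      · have hgen : ∀ (u : Finset (Fin n) → Fin n → ℝ≥0), IsProfile n μ u →
            (∀ k ∈ R, 0 < u R k → C k = R.inf' hR C) →
            ∑ i ∈ P, u R i = 0 := by
          intro u hp hsupp
          apply Finset.sum_eq_zero
          intro x hxP
          by_contra h0
          have hpos : 0 < u R x := pos_iff_ne_zero.mpr h0
          have hxR : x ∈ R := by
            by_contra hxR
            exact h0 (hp.1 R x hxR)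
          have hcx := hsupp x hxR hpos
          have hxt : C x = t := (Finset.mem_filter.1 hxP).2
          exact hm (hcx ▸ hxt)
        rw [hgen s hsp (fun k hk h =>
              NashAux.nash_support (μ := μ) s ⟨hsp, hsn⟩ R hR k hk h),
            hgen s' hsp' (fun k hk h => hsuppA R hR k hk h)]
  have htail : ∑ i ∈ P.erase j, load n s i = ∑ i ∈ P.erase j, load n s' i := by
    refine Finset.sum_congr rfl fun i hi => ?_
    have hij : i ≠ j := Finset.ne_of_mem_erase hi
    have hiP : i ∈ P := Finset.mem_of_mem_erase hi
    by_contra hne2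
    refine hplateau i j hij t ⟨⟨load n s i, load n s' i, hne2, ?_, ?_⟩,
      ⟨load n s j, load n s' j, hne, ?_, ?_⟩⟩
    · exact (Finset.mem_filter.1 hiP).2
    · exact (hCeq i).symm.trans (Finset.mem_filter.1 hiP).2
    · rfl
    · exact (hCeq j).symm
  have h1 := Finset.add_sum_erase P (load n s) hjP
  have h2 := Finset.add_sum_erase P (load n s') hjP
  apply hne
  have : load n s j + ∑ i ∈ P.erase j, load n s i
      = load n s' j + ∑ i ∈ P.erase j, load n s i := by
    rw [h1, htail, h2, hPsum]
  exact add_right_cancel this
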